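/- For n ≥ 4, the exponent set of PSC_n^{1,0} equals {2t : 1 ≤ t ≤ ⌊(n−1)/2⌋}. -/

import Mathlib

def IsPrimitive {n : ℕ} (A : Matrix (Fin n) (Fin n) ℝ) : Prop :=
  (∀ i j, 0 ≤ A i j) ∧ ∃ k : ℕ, 0 < k ∧ ∀ i j, 0 < (A ^ k) i j

def ExpIs {n : ℕ} (A : Matrix (Fin n) (Fin n) ℝ) (e : ℕ) : Prop :=
  IsLeast {k : ℕ | 0 < k ∧ ∀ i j, 0 < (A ^ k) i j} e

/-- A `(0,1)` companion matrix: superdiagonal entries `1` and all other entries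
`0` in the first `n-1` rows; last-row entries in `{0,1}`. -/
def IsCompanion {n : ℕ} (C : Matrix (Fin n) (Fin n) ℝ) : Prop :=
  ∀ i j : Fin n,
    if (i : ℕ) + 1 < n then (C i j = if (j : ℕ) = (i : ℕ) + 1 then 1 else 0)
    else (C i j = 0 ∨ C i j = 1)

/-- The set `C_n^{α,ε}` of symmetric companion matrices `C + Cᵀ` with
`c_{n,1} = α` and `c_{n,n} = ε`. -/
def companionClass (n : ℕ) (hn : 0 < n) (α ε : ℝ) :
    Set (Matrix (Fin n) (Fin n) ℝ) :=
  {A | ∃ C : Matrix (Fin n) (Fin n) ℝ, IsCompanion C ∧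
    C ⟨n - 1, by omega⟩ ⟨0, hn⟩ = α ∧ C ⟨n - 1, by omega⟩ ⟨n - 1, by omega⟩ = ε ∧
    A = C + C.transpose}

/-- `mRun S` : the maximum length of a run of consecutive integers contained in
`S` (`0` for the empty set). -/
noncomputable def mRun (S : Set ℕ) : ℕ := sSup {L : ℕ | ∃ a : ℕ, ∀ t, t < L → a + t ∈ S}

/-- The exponent set of a family of matrices. -/
def expSet {n : ℕ} (X : Set (Matrix (Fin n) (Fin n) ℝ)) : Set ℕ :=
  {e | ∃ A ∈ X, IsPrimitive A ∧ ExpIs A e}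

namespace PSCaux
open Matrix

variable {n : ℕ} {A : Matrix (Fin n) (Fin n) ℝ}

lemma pow_nonneg (hA : ∀ i j, 0 ≤ A i j) (k : ℕ) : ∀ i j, 0 ≤ (A ^ k) i j := by
  induction k with
  | zero => intro i j; simp [Matrix.one_apply]; split <;> norm_num
  | succ k ih =>
    intro i j
    rw [pow_succ, Matrix.mul_apply]
    exact Finset.sum_nonneg fun l _ => mul_nonneg (ih i l) (hA l j)

lemma Rzero {x y : Fin n} (h : 0 < (A ^ 0) x y) : x = y := by
  by_contra hne
  rw [pow_zero, Matrix.one_apply_ne hne] at h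
  exact lt_irrefl 0 h

lemma Rrefl (x : Fin n) : 0 < (A ^ 0) x x := by
  rw [pow_zero, Matrix.one_apply_eq]; norm_num

lemma Rconcat (hA : ∀ i j, 0 ≤ A i j) {k l : ℕ} {x y z : Fin n}
    (h1 : 0 < (A ^ k) x y) (h2 : 0 < (A ^ l) y z) : 0 < (A ^ (k + l)) x z := by
  rw [pow_add, Matrix.mul_apply]
  refine Finset.sum_pos' (fun i _ => mul_nonneg (pow_nonneg hA k x i) (pow_nonneg hA l i z)) ?_
  exact ⟨y, Finset.mem_univ y, mul_pos h1 h2⟩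

lemma Rstep (hA : ∀ i j, 0 ≤ A i j) {k : ℕ} {x y z : Fin n}
    (h1 : 0 < (A ^ k) x y) (h2 : 0 < A y z) : 0 < (A ^ (k + 1)) x z :=
  Rconcat hA h1 (by rwa [pow_one])

lemma Rsplit (hA : ∀ i j, 0 ≤ A i j) {k : ℕ} {x z : Fin n}
    (h : 0 < (A ^ (k + 1)) x z) : ∃ y, 0 < (A ^ k) x y ∧ 0 < A y z := by
  rw [pow_succ, Matrix.mul_apply] at h
  by_contra hc
  push_neg at hc
  have : ∀ l ∈ Finset.univ, (A ^ k) x l * A l z ≤ 0 := by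
    intro l _
    rcases lt_or_ge 0 ((A ^ k) x l) with h1 | h1
    · have := hc l h1
      exact mul_nonpos_of_nonneg_of_nonpos (le_of_lt h1) (le_of_not_gt (by intro hh; exact absurd hh (by simpa using this.not_gt)))
    · exact mul_nonpos_of_nonpos_of_nonneg h1 (hA l z)
  exact absurd h (not_lt.mpr (Finset.sum_nonpos this))

lemma Rsymm (hS : Aᵀ = A) {k : ℕ} {x y : Fin n} (h : 0 < (A ^ k) x y) :
    0 < (A ^ k) y x := by
  have : (A ^ k) y x = ((A ^ k)ᵀ) x y := rfl
  rw [this, Matrix.transpose_pow, hS]; exact h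

lemma Rpad2 (hA : ∀ i j, 0 ≤ A i j) (hS : Aᵀ = A) (hNb : ∀ y : Fin n, ∃ z, 0 < A y z)
    {k : ℕ} {x y : Fin n} (h : 0 < (A ^ k) x y) : 0 < (A ^ (k + 2)) x y := by
  obtain ⟨z, hz⟩ := hNb y
  have h2 : 0 < A z y := by
    have : A z y = Aᵀ y z := rfl
    rw [this, hS]; exact hz
  exact Rstep hA (Rstep hA h hz) h2

lemma RpadTo (hA : ∀ i j, 0 ≤ A i j) (hS : Aᵀ = A) (hNb : ∀ y : Fin n, ∃ z, 0 < A y z)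
    {k K : ℕ} {x y : Fin n} (h : 0 < (A ^ k) x y) (hle : k ≤ K) (hpar : K % 2 = k % 2) :
    0 < (A ^ K) x y := by
  obtain ⟨d, rfl⟩ : ∃ d, K = k + 2 * d := ⟨(K - k) / 2, by omega⟩
  clear hle hpar
  induction d with
  | zero => simpa using h
  | succ d ih =>
    have := Rpad2 hA hS hNb ih
    have he : k + 2 * (d + 1) = k + 2 * d + 2 := by ring
    rwa [he]

variable {n : ℕ} {C : Matrix (Fin n) (Fin n) ℝ}

lemma npos (hn : 4 ≤ n) : 0 < n := by omega

lemma C01 (hC : IsCompanion C) (i j : Fin n) : C i j = 0 ∨ C i j = 1 := by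
  have := hC i j
  split at this
  · rw [this]; split <;> simp
  · exact this

lemma Cnn (hC : IsCompanion C) (i j : Fin n) : 0 ≤ C i j := by
  rcases C01 hC i j with h | h <;> rw [h] <;> norm_num

lemma Csup (hC : IsCompanion C) (i j : Fin n) (h : (i : ℕ) + 1 < n) :
    C i j = if (j : ℕ) = (i : ℕ) + 1 then 1 else 0 := by
  have := hC i j
  rwa [if_pos h] at this

lemma Ann (hC : IsCompanion C) (i j : Fin n) : 0 ≤ (C + Cᵀ) i j := by
  have h1 := Cnn hC i j
  have h2 := Cnn hC j i
  simp [Matrix.add_apply, Matrix.transpose_apply]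
  linarith

lemma Asymm : (C + Cᵀ)ᵀ = C + Cᵀ := by
  rw [Matrix.transpose_add, Matrix.transpose_transpose, add_comm]

lemma Aapp (i j : Fin n) : (C + Cᵀ) i j = C i j + C j i := rfl

-- superdiagonal edges
lemma e_path (hC : IsCompanion C) (i : ℕ) (h : i + 1 < n) :
    0 < (C + Cᵀ) ⟨i, by omega⟩ ⟨i + 1, h⟩ := by
  rw [Aapp]
  have h1 : C ⟨i, by omega⟩ ⟨i+1, h⟩ = 1 := by
    rw [Csup hC _ _ (by simpa using h)]; simp
  have h2 := Cnn hC (⟨i+1, h⟩ : Fin n) ⟨i, by omega⟩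
  rw [h1]; linarith

-- characterization of edges among non-last vertices
lemma e_char (hC : IsCompanion C) (x y : Fin n) (hx : (x : ℕ) + 1 < n) (hy : (y : ℕ) + 1 < n)
    (h : 0 < (C + Cᵀ) x y) : (x : ℕ) + 1 = y ∨ (y : ℕ) + 1 = x := by
  rw [Aapp, Csup hC x y hx, Csup hC y x hy] at h
  by_contra hc
  push_neg at hc
  rw [if_neg (by omega), if_neg (by omega)] at h
  norm_num at h

lemma e_vv (hn : 4 ≤ n) (hC : IsCompanion C) (hε : C ⟨n - 1, by omega⟩ ⟨n - 1, by omega⟩ = 0) :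
    (C + Cᵀ) ⟨n - 1, by omega⟩ ⟨n - 1, by omega⟩ = 0 := by
  rw [Aapp, hε]; norm_num

lemma e_v0 (hn : 4 ≤ n) (hC : IsCompanion C) (hα : C ⟨n - 1, by omega⟩ ⟨0, npos hn⟩ = 1) :
    0 < (C + Cᵀ) ⟨n - 1, by omega⟩ ⟨0, npos hn⟩ := by
  rw [Aapp, hα]
  have := Cnn hC (⟨0, by omega⟩ : Fin n) ⟨n - 1, by omega⟩
  linarith

-- port characterization: edges at v
lemma e_vport (hn : 4 ≤ n) (hC : IsCompanion C) (y : Fin n)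
    (h : 0 < (C + Cᵀ) ⟨n - 1, by omega⟩ y) (hy : (y : ℕ) + 1 < n) :
    (y : ℕ) = n - 2 ∨ C ⟨n - 1, by omega⟩ y = 1 := by
  rw [Aapp, Csup hC y _ hy] at h
  by_cases hy2 : (y : ℕ) = n - 2
  · exact Or.inl hy2
  · right
    rw [if_neg (by simp; omega)] at h
    rcases C01 hC ⟨n - 1, by omega⟩ y with h0 | h1
    · rw [h0] at h; norm_num at h
    · exact h1

lemma e_chord (hn : 4 ≤ n) (hC : IsCompanion C) (y : Fin n)
    (h : C ⟨n - 1, by omega⟩ y = 1) : 0 < (C + Cᵀ) ⟨n - 1, by omega⟩ y := by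
  rw [Aapp, h]
  have := Cnn hC y ⟨n - 1, by omega⟩
  linarith

lemma e_neighbor (hn : 4 ≤ n) (hC : IsCompanion C) (hα : C ⟨n - 1, by omega⟩ ⟨0, npos hn⟩ = 1)
    (y : Fin n) : ∃ z, 0 < (C + Cᵀ) y z := by
  by_cases hy : (y : ℕ) + 1 < n
  · exact ⟨⟨(y : ℕ) + 1, hy⟩, by
      have := e_path hC (y : ℕ) hy
      convert this using 2⟩
  · have : y = ⟨n - 1, by omega⟩ := Fin.ext (by show (y:ℕ) = n-1; omega)
    rw [this]
    exact ⟨⟨0, by omega⟩, e_v0 hn hC hα⟩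


-- walk along the path from a to b (a ≤ b)
lemma Rpath (hC : IsCompanion C) :
    ∀ (d a : ℕ) (h : a + d < n), 0 < ((C + Cᵀ) ^ d) ⟨a, by omega⟩ ⟨a + d, h⟩ := by
  intro d
  induction d with
  | zero => intro a h; simpa using Rrefl (A := C + Cᵀ) ⟨a, by omega⟩
  | succ d ih =>
    intro a h
    have h1 : a + d < n := by omega
    have hw := ih a h1
    have he : 0 < (C + Cᵀ) ⟨a + d, h1⟩ ⟨a + d + 1, by omega⟩ := e_path hC (a + d) (by omega)
    have := Rstep (Ann hC) hw he
    convert this using 2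
    exact Fin.ext (by show a + (d + 1) = a + d + 1; omega)

-- Fin-level path walk
lemma RpathF (hC : IsCompanion C) (x y : Fin n) (hxy : (x : ℕ) ≤ y) :
    0 < ((C + Cᵀ) ^ ((y : ℕ) - x)) x y := by
  have h : (x : ℕ) + ((y : ℕ) - x) < n := by omega
  have := Rpath hC ((y : ℕ) - x) x h
  convert this using 2
  exact Fin.ext (by show (y:ℕ) = (x:ℕ) + ((y:ℕ) - x); omega)

-- The key parity-split lemma: a walk of "wrong parity" passes through v = n-1.
lemma lemA (hn : 4 ≤ n) (hC : IsCompanion C) :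
    ∀ (l : ℕ) (x y : Fin n), 0 < ((C + Cᵀ) ^ l) x y →
      (l + (x : ℕ) + y) % 2 = 0 ∨
      ∃ a b, a + b ≤ l ∧ (a + b) % 2 = l % 2 ∧
        0 < ((C + Cᵀ) ^ a) x ⟨n - 1, by omega⟩ ∧ 0 < ((C + Cᵀ) ^ b) ⟨n - 1, by omega⟩ y := by
  intro l
  induction l with
  | zero =>
    intro x y h
    have := Rzero h
    subst this
    left; omega
  | succ l ih =>
    intro x y h
    obtain ⟨z, hz, he⟩ := Rsplit (Ann hC) h
    by_cases hyv : (y : ℕ) = n - 1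
    · right
      have hy' : y = ⟨n - 1, by omega⟩ := Fin.ext (by show (y:ℕ) = n-1; omega)
      refine ⟨l + 1, 0, by omega, by omega, ?_, ?_⟩
      · rwa [hy'] at h
      · rw [hy']; exact Rrefl _
    by_cases hzv : (z : ℕ) = n - 1
    · right
      refine ⟨l, 1, by omega, by omega, ?_, ?_⟩
      · have : z = ⟨n - 1, by omega⟩ := Fin.ext (by show (z:ℕ) = n-1; omega)
        rwa [this] at hz
      · rw [pow_one]
        have : z = ⟨n - 1, by omega⟩ := Fin.ext (by show (z:ℕ) = n-1; omega)
        rwa [this] at he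
    · have hedge := e_char hC z y (by have := z.isLt; omega) (by have := y.isLt; omega) he
      rcases ih x z hz with hp | ⟨a, b, hab, hpar, hxa, hby⟩
      · left; omega
      · right
        refine ⟨a, b + 1, by omega, by omega, hxa, Rstep (Ann hC) hby he⟩


lemma Apos_symm (x y : Fin n) (h : 0 < (C + Cᵀ) x y) : 0 < (C + Cᵀ) y x := by
  have : (C + Cᵀ) y x = ((C + Cᵀ)ᵀ) x y := rfl
  rw [this, Asymm]; exact h

-- If n is even and A is primitive, there is an odd chord at v.
lemma oddChord (hn : 4 ≤ n) (hC : IsCompanion C) (hε : C ⟨n - 1, by omega⟩ ⟨n - 1, by omega⟩ = 0)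
    (hne : n % 2 = 0) (hprim : _root_.IsPrimitive (C + Cᵀ)) :
    ∃ j : Fin n, (j : ℕ) % 2 = 1 ∧ (j : ℕ) + 3 ≤ n ∧ 0 < (C + Cᵀ) ⟨n - 1, by omega⟩ j := by
  by_contra hcon
  push_neg at hcon
  -- every edge flips parity
  have hflip : ∀ z y : Fin n, 0 < (C + Cᵀ) z y → ((z : ℕ) + (y : ℕ)) % 2 = 1 := by
    have key : ∀ y : Fin n, (y : ℕ) + 1 < n → 0 < (C + Cᵀ) ⟨n - 1, by omega⟩ y →
        ((n - 1) + (y : ℕ)) % 2 = 1 := by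
      intro y hy h
      rcases e_vport hn hC y h hy with h2 | h2
      · omega
      · -- chord; cannot be odd
        have hodd : ¬ ((y : ℕ) % 2 = 1) := by
          intro hyo
          exact absurd h (not_lt.mpr (hcon y hyo (by omega)))
        omega
    intro z y h
    by_cases hz : (z : ℕ) + 1 < n
    · by_cases hy : (y : ℕ) + 1 < n
      · rcases e_char hC z y hz hy h with h1 | h1 <;> omega
      · have hyv : y = ⟨n - 1, by omega⟩ := Fin.ext (by show (y:ℕ) = n-1; have := y.isLt; omega)
        have := key z hz (by rw [hyv] at h; exact Apos_symm _ _ h)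
        have hyn : (y : ℕ) = n - 1 := by rw [hyv]
        omega
    · have hzv : z = ⟨n - 1, by omega⟩ := Fin.ext (by show (z:ℕ) = n-1; have := z.isLt; omega)
      by_cases hy : (y : ℕ) + 1 < n
      · have := key y hy (by rwa [hzv] at h)
        have hzn : (z : ℕ) = n - 1 := by rw [hzv]
        omega
      · have hyv : y = ⟨n - 1, by omega⟩ := Fin.ext (by show (y:ℕ) = n-1; have := y.isLt; omega)
        rw [hzv, hyv] at h
        rw [e_vv hn hC hε] at h
        norm_num at h
  -- parity invariant
  have hpar : ∀ (l : ℕ) (x y : Fin n), 0 < ((C + Cᵀ) ^ l) x y → (l + (x:ℕ) + (y:ℕ)) % 2 = 0 := by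
    intro l
    induction l with
    | zero => intro x y h; have := Rzero h; subst this; omega
    | succ l ih =>
      intro x y h
      obtain ⟨z, hz, he⟩ := Rsplit (Ann hC) h
      have h1 := ih x z hz
      have h2 := hflip z y he
      omega
  obtain ⟨_, k, hk, hkpos⟩ := hprim
  have h1 := hpar k ⟨0, by omega⟩ ⟨0, by omega⟩ (hkpos _ _)
  have h2 := hpar k ⟨0, by omega⟩ ⟨1, by omega⟩ (hkpos _ _)
  simp only [Fin.val_mk] at h1 h2
  omega

-- every pair is connected by a walk of length exactly 2*((n-1)/2)
lemma upperWalk (hn : 4 ≤ n) (hC : IsCompanion C)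
    (hα : C ⟨n - 1, by omega⟩ ⟨0, npos hn⟩ = 1)
    (hε : C ⟨n - 1, by omega⟩ ⟨n - 1, by omega⟩ = 0)
    (hprim : _root_.IsPrimitive (C + Cᵀ)) :
    ∀ x y : Fin n, 0 < ((C + Cᵀ) ^ (2 * ((n - 1) / 2))) x y := by
  set A := C + Cᵀ with hA
  have hAnn := Ann hC
  have hAs : Aᵀ = A := Asymm
  have hNb := e_neighbor hn hC hα
  set v : Fin n := ⟨n - 1, by omega⟩ with hv
  have hvn : (v : ℕ) = n - 1 := rfl
  -- walk from v down to any z (along the top path), length n-1-z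
  have hTop : ∀ z : Fin n, 0 < (A ^ (n - 1 - (z : ℕ))) v z := by
    intro z
    have h1 : (z : ℕ) ≤ (v : ℕ) := by have := z.isLt; show (z:ℕ) ≤ n - 1; omega
    exact Rsymm hAs (RpathF hC z v h1)
  have hBot : ∀ z : Fin n, 0 < (A ^ ((z : ℕ) + 1)) v z := by
    intro z
    have h0 : 0 < A v ⟨0, by omega⟩ := e_v0 hn hC hα
    have h1 : 0 < (A ^ ((z : ℕ) - 0)) ⟨0, by omega⟩ z := RpathF hC ⟨0, by omega⟩ z (by simp)
    have := Rconcat hAnn (by rwa [← pow_one A] at h0) h1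
    convert this using 2
    simp
    omega
  -- reduce to ordered pairs
  suffices hmain : ∀ x y : Fin n, (x : ℕ) ≤ (y : ℕ) → 0 < (A ^ (2 * ((n - 1) / 2))) x y by
    intro x y
    rcases le_total (x : ℕ) (y : ℕ) with h | h
    · exact hmain x y h
    · exact Rsymm hAs (hmain y x h)
  intro x y hxy
  have hyn := y.isLt
  have hxn := x.isLt
  by_cases hpar : ((y : ℕ) - (x : ℕ)) % 2 = 0
  · -- straight path walk, then pad
    have hw := RpathF hC x y hxy
    exact RpadTo hAnn hAs hNb hw (by omega) (by omega)
  · -- odd distance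
    by_cases hne : n % 2 = 1
    · -- odd n : go around x → 0 → v → y
      have hw1 : 0 < (A ^ ((x : ℕ) + 1)) x v := by
        have h1 : 0 < (A ^ ((x : ℕ) - 0)) ⟨0, by omega⟩ x := RpathF hC ⟨0, by omega⟩ x (by simp)
        have h2 : 0 < A ⟨0, by omega⟩ v := Apos_symm _ _ (e_v0 hn hC hα)
        have := Rstep hAnn (Rsymm hAs h1) h2
        convert this using 2
        omega
      have hw2 := hTop y
      have hw := Rconcat hAnn hw1 hw2
      exact RpadTo hAnn hAs hNb hw (by omega) (by omega)
    · -- even n : use an odd chord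
      obtain ⟨j, hj1, hj2, hj3⟩ := oddChord hn hC hε (by omega) hprim
      by_cases hjx : (j : ℕ) ≤ (x : ℕ)
      · -- x → j (down), chord to v, v → y (top)
        have hw1 : 0 < (A ^ ((x : ℕ) - (j : ℕ))) x j := Rsymm hAs (RpathF hC j x hjx)
        have hw2 : 0 < A j v := Apos_symm _ _ hj3
        have hw3 := hTop y
        have hw := Rconcat hAnn (Rstep hAnn hw1 hw2) hw3
        refine RpadTo hAnn hAs hNb hw (by omega) (by omega)
      · by_cases hyv : (y : ℕ) = n - 1
        · -- x → j (up), chord to v = y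
          have hw1 : 0 < (A ^ ((j : ℕ) - (x : ℕ))) x j := RpathF hC x j (by omega)
          have hw2 : 0 < A j v := Apos_symm _ _ hj3
          have hw := Rstep hAnn hw1 hw2
          have hyv' : y = v := Fin.ext (by show (y:ℕ) = n-1; omega)
          rw [hyv']
          refine RpadTo hAnn hAs hNb hw (by omega) (by omega)
        · -- x → 0 → v → j → y
          have hw1 : 0 < (A ^ ((x : ℕ) + 1)) x v := by
            have h1 : 0 < (A ^ ((x : ℕ) - 0)) ⟨0, by omega⟩ x := RpathF hC ⟨0, by omega⟩ x (by simp)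
            have h2 : 0 < A ⟨0, by omega⟩ v := Apos_symm _ _ (e_v0 hn hC hα)
            have := Rstep hAnn (Rsymm hAs h1) h2
            convert this using 2
            omega
          have hw2 : 0 < (A ^ 1) v j := by rwa [pow_one]
          by_cases hjy : (j : ℕ) ≤ (y : ℕ)
          · have hw3 : 0 < (A ^ ((y : ℕ) - (j : ℕ))) j y := RpathF hC j y hjy
            have hw := Rconcat hAnn (Rconcat hAnn hw1 hw2) hw3
            refine RpadTo hAnn hAs hNb hw (by omega) (by omega)
          · have hw3 : 0 < (A ^ ((j : ℕ) - (y : ℕ))) j y := Rsymm hAs (RpathF hC y j (by omega))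
            have hw := Rconcat hAnn (Rconcat hAnn hw1 hw2) hw3
            refine RpadTo hAnn hAs hNb hw (by omega) (by omega)


lemma A02 (hn : 4 ≤ n) (hC : IsCompanion C) : (C + Cᵀ) ⟨0, npos hn⟩ ⟨2, by omega⟩ = 0 := by
  rw [Aapp, Csup hC _ _ (by simp; omega), Csup hC _ _ (by simp; omega)]
  norm_num

lemma expEven (hn : 4 ≤ n) (hC : IsCompanion C)
    (hα : C ⟨n - 1, by omega⟩ ⟨0, npos hn⟩ = 1)
    {e : ℕ} (he : ExpIs (C + Cᵀ) e) : e % 2 = 0 := by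
  by_contra hodd
  set A := C + Cᵀ with hA
  have hAnn := Ann hC
  have hAs : Aᵀ = A := Asymm
  have hNb := e_neighbor hn hC hα
  set v : Fin n := ⟨n - 1, by omega⟩ with hv
  have hepos := he.1.1
  have hall := he.1.2
  have he1 : e ≠ 1 := by
    intro h
    have h2 := hall ⟨0, by omega⟩ ⟨2, by omega⟩
    rw [h, pow_one, hA, A02 hn hC] at h2
    exact lt_irrefl 0 h2
  have he3 : 3 ≤ e := by omega
  have hsplit : ∀ z : Fin n, ∃ a b, a + b ≤ e ∧ (a + b) % 2 = 1 ∧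
      0 < (A ^ a) z v ∧ 0 < (A ^ b) v z := by
    intro z
    rcases lemA hn hC e z z (hall z z) with hp | ⟨a, b, h1, h2, h3, h4⟩
    · omega
    · exact ⟨a, b, h1, by omega, h3, h4⟩
  have hstep : ∀ x y : Fin n, 0 < (A ^ (e - 1)) x y := by
    intro x y
    obtain ⟨a1, b1, s1, p1, xa, xb⟩ := hsplit x
    obtain ⟨a2, b2, s2, p2, ya, yb⟩ := hsplit y
    have hx2 : 0 < (A ^ b1) x v := Rsymm hAs xb
    have hy2 : 0 < (A ^ a2) v y := Rsymm hAs ya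
    have hcases : ((a1 + b2) % 2 = 0 ∧ a1 + b2 ≤ e - 1) ∨ ((a1 + a2) % 2 = 0 ∧ a1 + a2 ≤ e - 1) ∨
        ((b1 + b2) % 2 = 0 ∧ b1 + b2 ≤ e - 1) ∨ ((b1 + a2) % 2 = 0 ∧ b1 + a2 ≤ e - 1) := by
      omega
    rcases hcases with ⟨hp, hl⟩ | ⟨hp, hl⟩ | ⟨hp, hl⟩ | ⟨hp, hl⟩
    · exact RpadTo hAnn hAs hNb (Rconcat hAnn xa yb) hl (by omega)
    · exact RpadTo hAnn hAs hNb (Rconcat hAnn xa hy2) hl (by omega)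
    · exact RpadTo hAnn hAs hNb (Rconcat hAnn hx2 yb) hl (by omega)
    · exact RpadTo hAnn hAs hNb (Rconcat hAnn hx2 hy2) hl (by omega)
  have : e ≤ e - 1 := he.2 ⟨by omega, hstep⟩
  omega

lemma forward (hn : 4 ≤ n) (hC : IsCompanion C)
    (hα : C ⟨n - 1, by omega⟩ ⟨0, npos hn⟩ = 1)
    (hε : C ⟨n - 1, by omega⟩ ⟨n - 1, by omega⟩ = 0)
    (hprim : _root_.IsPrimitive (C + Cᵀ)) {e : ℕ} (he : ExpIs (C + Cᵀ) e) :
    ∃ t : ℕ, 1 ≤ t ∧ t ≤ (n - 1) / 2 ∧ e = 2 * t := by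
  have hev := expEven hn hC hα he
  have hle : e ≤ 2 * ((n - 1) / 2) :=
    he.2 ⟨by omega, upperWalk hn hC hα hε hprim⟩
  have hepos := he.1.1
  exact ⟨e / 2, by omega, by omega, by omega⟩


lemma Rcast {k k' : ℕ} {A : Matrix (Fin n) (Fin n) ℝ} {x y : Fin n} (h : k = k')
    (hw : 0 < (A ^ k) x y) : 0 < (A ^ k') x y := h ▸ hw

lemma posA_cast {A : Matrix (Fin n) (Fin n) ℝ} {x x' y y' : Fin n} (hx : x = x') (hy : y = y')
    (h : 0 < A x y) : 0 < A x' y' := hx ▸ hy ▸ h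

/-- The construction: last row has ones exactly on columns `0,…,n-2t`. -/
def Cmat (n t : ℕ) : Matrix (Fin n) (Fin n) ℝ :=
  Matrix.of fun i j =>
    if (i : ℕ) + 1 < n then (if (j : ℕ) = (i : ℕ) + 1 then 1 else 0)
    else (if (j : ℕ) ≤ n - 2 * t then 1 else 0)

lemma Cmat_companion (n t : ℕ) : IsCompanion (Cmat n t) := by
  intro i j
  by_cases h : (i : ℕ) + 1 < n
  · rw [if_pos h]; simp [Cmat, h]
  · rw [if_neg h]
    by_cases h2 : (j : ℕ) ≤ n - 2 * t
    · right; simp [Cmat, h, h2]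
    · left; simp [Cmat, h, h2]

section Constr

variable {n t : ℕ}

lemma Cmat_last (hn : 4 ≤ n) (j : Fin n) :
    Cmat n t ⟨n - 1, by omega⟩ j = if (j : ℕ) ≤ n - 2 * t then 1 else 0 := by
  show (if (n - 1) + 1 < n then _ else _) = _
  rw [if_neg (by omega)]

lemma Cmat_alpha (hn : 4 ≤ n) : Cmat n t ⟨n - 1, by omega⟩ ⟨0, npos hn⟩ = 1 := by
  rw [Cmat_last hn, if_pos (by show (0:ℕ) ≤ n - 2*t; omega)]

lemma Cmat_eps (hn : 4 ≤ n) (ht1 : 1 ≤ t) : Cmat n t ⟨n - 1, by omega⟩ ⟨n - 1, by omega⟩ = 0 := by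
  rw [Cmat_last hn, if_neg (by show ¬((n-1:ℕ) ≤ n - 2*t); omega)]

lemma Cmat_chord (hn : 4 ≤ n) (j : Fin n) (hj : (j : ℕ) ≤ n - 2 * t) :
    0 < (Cmat n t + (Cmat n t)ᵀ) ⟨n - 1, by omega⟩ j := by
  apply e_chord hn (Cmat_companion n t)
  rw [Cmat_last hn, if_pos hj]

lemma constrUpper (hn : 4 ≤ n) (ht1 : 1 ≤ t) (ht2 : 2 * t + 1 ≤ n) :
    ∀ x y : Fin n, 0 < ((Cmat n t + (Cmat n t)ᵀ) ^ (2 * t)) x y := by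
  set C := Cmat n t with hCdef
  have hC : IsCompanion C := Cmat_companion n t
  set A := C + Cᵀ with hA
  have hAnn := Ann hC
  have hAs : Aᵀ = A := Asymm
  have hα : C ⟨n - 1, by omega⟩ ⟨0, by omega⟩ = 1 := Cmat_alpha hn
  have hNb := e_neighbor hn hC hα
  set v : Fin n := ⟨n - 1, by omega⟩ with hv
  set m : ℕ := n - 2 * t with hm
  have hm1 : 1 ≤ m := by omega
  have hchord : ∀ j : Fin n, (j : ℕ) ≤ m → 0 < A v j := fun j hj => Cmat_chord hn j hj
  -- forward walks: v to y of length (y∸m)+1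
  have fwd1 : ∀ y : Fin n, 0 < (A ^ ((y : ℕ) - m + 1)) v y := by
    intro y
    by_cases hy : (y : ℕ) ≤ m
    · have h1 : 0 < (A ^ 1) v y := by rw [pow_one]; exact hchord y hy
      exact Rcast (by omega) h1
    · have h1 : 0 < (A ^ 1) v ⟨m, by omega⟩ := by rw [pow_one]; exact hchord _ (by simp)
      have h2 : 0 < (A ^ ((y : ℕ) - m)) ⟨m, by omega⟩ y := by
        have := RpathF hC ⟨m, by omega⟩ y (by simp; omega)
        convert this using 2
      exact Rcast (by omega) (Rconcat hAnn h1 h2)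
  -- forward walks: v to y of length (y∸m)+2
  have fwd2 : ∀ y : Fin n, 0 < (A ^ ((y : ℕ) - m + 2)) v y := by
    intro y
    by_cases hy : (y : ℕ) ≤ m
    · by_cases hy0 : (y : ℕ) = 0
      · have h1 : 0 < (A ^ 1) v ⟨1, by omega⟩ := by rw [pow_one]; exact hchord _ (by simp; omega)
        have h2 : 0 < A ⟨1, by omega⟩ y := by
          have h3 : 0 < A ⟨0, by omega⟩ ⟨1, by omega⟩ := e_path hC 0 (by omega)
          have h4 : y = ⟨0, by omega⟩ := Fin.ext (by show (y:ℕ) = 0; omega)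
          rw [h4]
          exact Apos_symm _ _ h3
        exact Rcast (by omega) (Rstep hAnn h1 h2)
      · have h1 : 0 < (A ^ 1) v ⟨(y : ℕ) - 1, by omega⟩ := by
          rw [pow_one]; exact hchord _ (by simp; omega)
        have h2 : 0 < A ⟨(y : ℕ) - 1, by omega⟩ y := by
          have h3 := e_path hC ((y : ℕ) - 1) (by have := y.isLt; omega)
          exact posA_cast rfl (Fin.ext (by show ((y:ℕ)-1)+1 = (y:ℕ); omega)) h3
        exact Rcast (by omega) (Rstep hAnn h1 h2)
    · have h1 : 0 < (A ^ 1) v ⟨m - 1, by omega⟩ := by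
        rw [pow_one]; exact hchord _ (by show m - 1 ≤ m; omega)
      have h2 : 0 < (A ^ ((y : ℕ) - (m - 1))) ⟨m - 1, by omega⟩ y := by
        have := RpathF hC ⟨m - 1, by omega⟩ y (by simp; omega)
        convert this using 2
      exact Rcast (by omega) (Rconcat hAnn h1 h2)
  -- backward walks: v to y along top path, length (n-1) - y
  have bwd : ∀ y : Fin n, 0 < (A ^ (n - 1 - (y : ℕ))) v y := by
    intro y
    have h1 : (y : ℕ) ≤ (v : ℕ) := by have := y.isLt; show (y:ℕ) ≤ n - 1; omega
    exact Rsymm hAs (RpathF hC y v h1)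
  -- assemble
  intro x y
  have hxn := x.isLt
  have hyn := y.isLt
  set ux : ℕ := (x : ℕ) - m with hux
  set uy : ℕ := (y : ℕ) - m with huy
  have hux2 : ux ≤ 2 * t - 1 := by omega
  have huy2 : uy ≤ 2 * t - 1 := by omega
  by_cases hs : ux + uy + 2 ≤ 2 * t
  · by_cases hp : (ux + uy) % 2 = 0
    · have hw := Rconcat hAnn (Rsymm hAs (fwd1 x)) (fwd1 y)
      exact RpadTo hAnn hAs hNb hw (by omega) (by omega)
    · have hw := Rconcat hAnn (Rsymm hAs (fwd1 x)) (fwd2 y)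
      exact RpadTo hAnn hAs hNb hw (by omega) (by omega)
  · by_cases hp : (ux + uy) % 2 = 0
    · have hw := Rconcat hAnn (Rsymm hAs (bwd x)) (bwd y)
      exact RpadTo hAnn hAs hNb hw (by omega) (by omega)
    · rcases lt_or_ge ux uy with hlt | hle
      · have hw := Rconcat hAnn (Rsymm hAs (fwd2 x)) (bwd y)
        exact RpadTo hAnn hAs hNb hw (by omega) (by omega)
      · have hw := Rconcat hAnn (Rsymm hAs (bwd x)) (fwd2 y)
        exact RpadTo hAnn hAs hNb hw (by omega) (by omega)



/-- Parity-distance certificate on the quotient `C_{2t}` with a loop at `0`,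
measured from the vertex `2t-1`. -/
def Wc (t p q : ℕ) : ℕ :=
  if (p + q + 1) % 2 = 0 then min (q + 1) (2 * t - 1 - q) else 2 + min q (2 * t - q)

lemma Wc_edge (ht : 1 ≤ t) {p q r : ℕ} (hq : q ≤ 2 * t - 1) (hr : r ≤ 2 * t - 1)
    (hrel : (r = 0 ∧ q = 0) ∨ r + 1 = q ∨ q + 1 = r ∨
      (r = 2 * t - 1 ∧ q = 0) ∨ (q = 2 * t - 1 ∧ r = 0)) :
    Wc t ((p + 1) % 2) q ≤ Wc t (p % 2) r + 1 := by
  unfold Wc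
  split_ifs <;> omega

-- edge relation for the construction, in quotient coordinates
lemma edgeQ (hn : 4 ≤ n) (ht1 : 1 ≤ t) (ht2 : 2 * t + 1 ≤ n) (z y : Fin n)
    (h : 0 < (Cmat n t + (Cmat n t)ᵀ) z y) :
    ((z : ℕ) - (n - 2 * t) = 0 ∧ (y : ℕ) - (n - 2 * t) = 0) ∨
    ((z : ℕ) - (n - 2 * t)) + 1 = (y : ℕ) - (n - 2 * t) ∨
    ((y : ℕ) - (n - 2 * t)) + 1 = (z : ℕ) - (n - 2 * t) ∨
    ((z : ℕ) - (n - 2 * t) = 2 * t - 1 ∧ (y : ℕ) - (n - 2 * t) = 0) ∨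
    ((y : ℕ) - (n - 2 * t) = 2 * t - 1 ∧ (z : ℕ) - (n - 2 * t) = 0) := by
  have hC : IsCompanion (Cmat n t) := Cmat_companion n t
  have hzn := z.isLt
  have hyn := y.isLt
  have key : ∀ w : Fin n, (w : ℕ) + 1 < n → 0 < (Cmat n t + (Cmat n t)ᵀ) ⟨n - 1, by omega⟩ w →
      (w : ℕ) = n - 2 ∨ (w : ℕ) ≤ n - 2 * t := by
    intro w hw hpos
    rcases e_vport hn hC w hpos hw with h1 | h1
    · exact Or.inl h1
    · right
      rw [Cmat_last hn] at h1
      by_contra hc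
      rw [if_neg hc] at h1
      norm_num at h1
  by_cases hz : (z : ℕ) + 1 < n
  · by_cases hy : (y : ℕ) + 1 < n
    · rcases e_char hC z y hz hy h with h1 | h1 <;> omega
    · have hyv : y = ⟨n - 1, by omega⟩ := Fin.ext (by show (y:ℕ) = n - 1; omega)
      have hyn' : (y : ℕ) = n - 1 := by rw [hyv]
      have := key z hz (by rw [hyv] at h; exact Apos_symm _ _ h)
      omega
  · have hzv : z = ⟨n - 1, by omega⟩ := Fin.ext (by show (z:ℕ) = n - 1; omega)
    have hzn' : (z : ℕ) = n - 1 := by rw [hzv]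
    by_cases hy : (y : ℕ) + 1 < n
    · have := key y hy (by rwa [hzv] at h)
      omega
    · have hyv : y = ⟨n - 1, by omega⟩ := Fin.ext (by show (y:ℕ) = n - 1; omega)
      rw [hzv, hyv, e_vv hn hC (Cmat_eps hn ht1)] at h
      norm_num at h

lemma lemB (hn : 4 ≤ n) (ht1 : 1 ≤ t) (ht2 : 2 * t + 1 ≤ n) :
    ∀ (l : ℕ) (y : Fin n), 0 < ((Cmat n t + (Cmat n t)ᵀ) ^ l) ⟨n - 1, by omega⟩ y →
      Wc t (l % 2) ((y : ℕ) - (n - 2 * t)) ≤ l := by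
  have hC : IsCompanion (Cmat n t) := Cmat_companion n t
  intro l
  induction l with
  | zero =>
    intro y h
    have hy := (Rzero h).symm
    subst hy
    show Wc t (0 % 2) ((n - 1) - (n - 2 * t)) ≤ 0
    unfold Wc
    split_ifs <;> omega
  | succ l ih =>
    intro y h
    obtain ⟨z, hz, he⟩ := Rsplit (Ann hC) h
    have hrel := edgeQ hn ht1 ht2 z y he
    have hq : (y : ℕ) - (n - 2 * t) ≤ 2 * t - 1 := by have := y.isLt; omega
    have hr : (z : ℕ) - (n - 2 * t) ≤ 2 * t - 1 := by have := z.isLt; omega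
    calc Wc t ((l + 1) % 2) ((y : ℕ) - (n - 2 * t))
        ≤ Wc t (l % 2) ((z : ℕ) - (n - 2 * t)) + 1 := Wc_edge ht1 hq hr hrel
      _ ≤ l + 1 := by have := ih z hz; omega

lemma constrLower (hn : 4 ≤ n) (ht1 : 1 ≤ t) (ht2 : 2 * t + 1 ≤ n) (k : ℕ)
    (hk0 : 0 < k) (hk : k < 2 * t) :
    ∃ i j : Fin n, ¬ (0 < ((Cmat n t + (Cmat n t)ᵀ) ^ k) i j) := by
  have hC : IsCompanion (Cmat n t) := Cmat_companion n t
  have hAs : (Cmat n t + (Cmat n t)ᵀ)ᵀ = Cmat n t + (Cmat n t)ᵀ := Asymm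
  set a : Fin n := ⟨n - t, by omega⟩ with ha
  have hav : (a : ℕ) = n - t := rfl
  by_cases hkp : k % 2 = 1
  · refine ⟨a, a, ?_⟩
    intro hpos
    rcases lemA hn hC k a a hpos with hp | ⟨a', b', hs, hpar, h1, h2⟩
    · rw [hav] at hp; omega
    · have w1 := lemB hn ht1 ht2 a' a (Rsymm hAs h1)
      have w2 := lemB hn ht1 ht2 b' a h2
      have harg : (a : ℕ) - (n - 2 * t) = t := by omega
      rw [harg] at w1 w2
      unfold Wc at w1 w2
      split_ifs at w1 w2 <;> omega
  · have ht2' : 2 ≤ t := by omega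
    set b : Fin n := ⟨n - t + 1, by omega⟩ with hb
    have hbv : (b : ℕ) = n - t + 1 := rfl
    refine ⟨a, b, ?_⟩
    intro hpos
    rcases lemA hn hC k a b hpos with hp | ⟨a', b', hs, hpar, h1, h2⟩
    · omega
    · have w1 := lemB hn ht1 ht2 a' a (Rsymm hAs h1)
      have w2 := lemB hn ht1 ht2 b' b h2
      have harg : (a : ℕ) - (n - 2 * t) = t := by omega
      have harg2 : (b : ℕ) - (n - 2 * t) = t + 1 := by omega
      rw [harg] at w1
      rw [harg2] at w2
      unfold Wc at w1 w2
      split_ifs at w1 w2 <;> omega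

end Constr

end PSCaux

/-- For `n ≥ 4`, `E(PSC_n^{1,0}) = {2t : 1 ≤ t ≤ ⌊(n-1)/2⌋}`. -/
theorem expSet_PSC_one_zero {n : ℕ} (hn : 4 ≤ n) :
    expSet (companionClass n (by omega) 1 0) =
      {e : ℕ | ∃ t : ℕ, 1 ≤ t ∧ t ≤ (n - 1) / 2 ∧ e = 2 * t} := by
  ext e
  simp only [expSet, companionClass, Set.mem_setOf_eq]
  constructor
  · rintro ⟨A, ⟨C, hC, hα, hε, rfl⟩, hprim, hexp⟩
    exact PSCaux.forward hn hC hα hε hprim hexp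
  · rintro ⟨t, ht1, ht2, rfl⟩
    have ht2' : 2 * t + 1 ≤ n := by omega
    refine ⟨PSCaux.Cmat n t + (PSCaux.Cmat n t).transpose,
      ⟨PSCaux.Cmat n t, PSCaux.Cmat_companion n t, PSCaux.Cmat_alpha hn,
        PSCaux.Cmat_eps hn ht1, rfl⟩, ?_, ?_⟩
    · exact ⟨PSCaux.Ann (PSCaux.Cmat_companion n t), 2 * t, by omega,
        PSCaux.constrUpper hn ht1 ht2'⟩
    · constructor
      · exact ⟨by omega, PSCaux.constrUpper hn ht1 ht2'⟩
      · intro k hk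
        by_contra hlt
        push_neg at hlt
        obtain ⟨i, j, hij⟩ := PSCaux.constrLower hn ht1 ht2' k hk.1 hlt
        exact hij (hk.2 i j)
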